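/- Let P be a finite poset, let x < y in P, and let σ : P → ℤ be a strictly increasing function. Consider the reduced order cochain complex C̃^• of the half-open interval (x,y] = {z ∈ P : x < z ≤ y}, and for p ∈ ℤ define F^p C̃^d to be the subgroup spanned by those chains z_0 < ⋯ < z_d in (x,y] with σ(z_d) ≥ p, where in degree d = −1 one sets F^p C̃^{−1} = C̃^{−1} if p ≤ σ(x) and 0 otherwise. Then: (1) each F^p is a subcomplex of C̃^•, giving a decreasing filtration; and (2) for every p, the quotient complex F^p C̃^•/F^{p+1}C̃^• is isomorphic, as a cochain complex of abelian groups, to the direct sum ⊕_{x ≤ z ≤ y, σ(z) = p} C̃^{•−1}(x,z), via the map sending (the class of) a chain z_0 < ⋯ < z_d with σ(z_d) = p to the chain z_0 < ⋯ < z_{d−1} regarded as a basis element of C̃^{d−1}(x, z_d) (the empty chain in degree −1 is sent to the generator of C̃^{−2}(x,x) = ℤ when p = σ(x)). -/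

import Mathlib

attribute [local instance] Classical.propDecidable

universe u

variable {P : Type u} [PartialOrder P]

/-! ### The reduced order cochain complex of the half-open interval `(x, y]` -/

/-- A chain `z_0 < z_1 < ⋯ < z_{n-1}` of `n` elements in the half-open interval
`(x, y] = {z | x < z ≤ y}`, i.e. a basis element of the degree-`(n-1)` term of the
reduced order cochain complex `C̃^{n-1}(N(x,y])`.  For `n = 0` this is the empty chain. -/
abbrev HalfOpenChain (x y : P) (n : ℕ) : Type u :=
  {w : Fin n → P // StrictMono w ∧ ∀ i, w i ∈ Set.Ioc x y}

/-- The degree-`(n-1)` term `C̃^{n-1}(N(x,y])` of the reduced order cochain complex of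
the half-open interval: the free `ℤ`-module on chains of `n` elements of `(x,y]`. -/
abbrev HalfOpenCochain (x y : P) (n : ℕ) : Type u :=
  HalfOpenChain x y n →₀ ℤ

noncomputable instance [Fintype P] (x y : P) (n : ℕ) : Fintype (HalfOpenChain x y n) :=
  Subtype.fintype _

/-- The differential of the reduced order cochain complex of `(x,y]`: a chain `c` is sent
to the alternating sum over all ways of inserting an element of `(x,y]` into `c`, with
sign `(-1)^j` where `j` is the (0-indexed) position of the new element in the resulting
chain. -/
noncomputable def halfOpenCoboundary [Fintype P] (x y : P) (n : ℕ) :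
    HalfOpenCochain x y n →ₗ[ℤ] HalfOpenCochain x y (n + 1) :=
  Finsupp.lsum ℤ fun c => LinearMap.toSpanSingleton ℤ (HalfOpenCochain x y (n + 1))
    (∑ c' : HalfOpenChain x y (n + 1), ∑ j : Fin (n + 1),
      (if c'.val ∘ j.succAbove = c.val then ((-1 : ℤ)) ^ (j : ℕ) else 0) •
        Finsupp.single c' 1)

/-- The last element of a chain of `n` elements, with the convention that the last element
of the empty chain is `x` (thought of as the entry `z_{-1} = x` of the augmented chain
`x = z_{-1} < z_0 < ⋯ < z_{n-1}`). -/
def lastEntry (x : P) : ∀ {n : ℕ}, (Fin n → P) → P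
  | 0, _ => x
  | (m + 1), w => w (Fin.last m)

/-- The filtration `F^p C̃^{n-1}(N(x,y])`: the span of the chains `z_0 < ⋯ < z_{n-1}`
with `σ(z_{n-1}) ≥ p`; in degree `-1` (i.e. `n = 0`) this is all of `C̃^{-1}` if
`p ≤ σ(x)` and `0` otherwise. -/
noncomputable def filtF [Fintype P] (x y : P) (σ : P → ℤ) (p : ℤ) (n : ℕ) :
    Submodule ℤ (HalfOpenCochain x y n) :=
  Finsupp.supported ℤ ℤ {c : HalfOpenChain x y n | p ≤ σ (lastEntry x c.val)}

/-- The degree-`n` piece of the quotient complex `F^p C̃^• / F^{p+1} C̃^•`. -/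
noncomputable abbrev gradedPiece [Fintype P] (x y : P) (σ : P → ℤ) (p : ℤ) (n : ℕ) :
    Type u :=
  ↥(filtF x y σ p n) ⧸
    Submodule.comap (filtF x y σ p n).subtype (filtF x y σ (p + 1) n)

/-! ### The interval complexes `C̃^{•-1}(x,z)` -/

/-- A basis element of `C̃^{m-2}(x,z)`: a strictly increasing sequence
`x = w 0 < w 1 < ⋯ < w m = z`.  For `x < z` these are the faces of the nerve of the open
interval `(x,z)`; for `x = z` the only such sequence has `m = 0`, giving `ℤ` placed in
degree `-2`. -/
abbrev IntervalChain (x z : P) (m : ℕ) : Type u :=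
  {w : Fin (m + 1) → P // StrictMono w ∧ w 0 = x ∧ w (Fin.last m) = z}

/-- The degree-`(m-2)` term of the complex `C̃^•(x,z)`. -/
abbrev IntervalCochain (x z : P) (m : ℕ) : Type u :=
  IntervalChain x z m →₀ ℤ

noncomputable instance [Fintype P] (x z : P) (m : ℕ) : Fintype (IntervalChain x z m) :=
  Subtype.fintype _

/-- The differential of `C̃^•(x,z)`: the alternating sum over all ways of inserting an
element into the sequence, with sign `(-1)^{j-1}` for insertion at index `j` of the
augmented sequence (so the exponent is the position of the new element in the chain of
the open interval, not counting the initial entry `x`). -/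
noncomputable def intervalCoboundary [Fintype P] (x z : P) (m : ℕ) :
    IntervalCochain x z m →ₗ[ℤ] IntervalCochain x z (m + 1) :=
  Finsupp.lsum ℤ fun c => LinearMap.toSpanSingleton ℤ (IntervalCochain x z (m + 1))
    (∑ c' : IntervalChain x z (m + 1), ∑ j : Fin (m + 2),
      (if c'.val ∘ j.succAbove = c.val then ((-1 : ℤ)) ^ ((j : ℕ) - 1) else 0) •
        Finsupp.single c' 1)

/-- The degree-`n` term `⊕_{x ≤ z ≤ y, σ(z) = p} C̃^{n-2}(x,z)` of the direct sum of the
shifted interval complexes `C̃^{•-1}(x,z)` (the degree-`d` term of `C̃^{•-1}(x,z)` being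
`C̃^{d-1}(x,z)`, i.e. `m = n` in our indexing where `n = d + 1`). -/
noncomputable abbrev gradedTarget [Fintype P] (x y : P) (σ : P → ℤ) (p : ℤ) (n : ℕ) :
    Type u :=
  DirectSum {z : P // x ≤ z ∧ z ≤ y ∧ σ z = p} (fun z => IntervalCochain x z.val n)

/-- The differential of the direct sum of the shifted interval complexes. -/
noncomputable def gradedTargetCoboundary [Fintype P] (x y : P) (σ : P → ℤ) (p : ℤ)
    (n : ℕ) : gradedTarget x y σ p n →ₗ[ℤ] gradedTarget x y σ p (n + 1) :=
  DirectSum.toModule ℤ _ _ fun z =>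
    (DirectSum.lof ℤ _ (fun z : {z : P // x ≤ z ∧ z ≤ y ∧ σ z = p} =>
      IntervalCochain x z.val (n + 1)) z).comp (intervalCoboundary x z.val n)


namespace FiltAux

lemma val_succAbove {n : ℕ} (p : Fin (n+1)) (i : Fin n) :
    (p.succAbove i : ℕ) = if (i : ℕ) < (p : ℕ) then (i : ℕ) else (i : ℕ) + 1 := by
  rw [Fin.succAbove]
  split_ifs with h1 h2 h2 <;> simp_all [Fin.lt_def]

/-- The sign-reversing involution on pairs (j,k) of deletion indices. -/
def invo {n : ℕ} (q : Fin (n+2) × Fin (n+1)) : Fin (n+2) × Fin (n+1) :=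
  if h : (q.2 : ℕ) < (q.1 : ℕ) then
    (q.2.castSucc, ⟨(q.1 : ℕ) - 1, by omega⟩)
  else
    (q.2.succ, ⟨(q.1 : ℕ), by omega⟩)

lemma invo_invo {n : ℕ} (q : Fin (n+2) × Fin (n+1)) : invo (invo q) = q := by
  obtain ⟨j, k⟩ := q
  unfold invo
  by_cases h : (k : ℕ) < (j : ℕ)
  · rw [dif_pos h]
    have : ¬ ((⟨(j:ℕ)-1, by omega⟩ : Fin (n+1)) : ℕ) < ((k.castSucc : Fin (n+2)) : ℕ) := by
      simp; omega
    rw [dif_neg this]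
    ext <;> simp <;> omega
  · rw [dif_neg h]
    have : ((⟨(j:ℕ), by omega⟩ : Fin (n+1)) : ℕ) < ((k.succ : Fin (n+2)) : ℕ) := by
      simp; omega
    rw [dif_pos this]
    ext <;> simp <;> omega

lemma invo_ne {n : ℕ} (q : Fin (n+2) × Fin (n+1)) : invo q ≠ q := by
  obtain ⟨j, k⟩ := q
  unfold invo
  by_cases h : (k : ℕ) < (j : ℕ)
  · rw [dif_pos h]; intro he
    have := congrArg (fun z => ((z.1 : Fin (n+2)) : ℕ)) he
    simp at this; omega
  · rw [dif_neg h]; intro he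
    have := congrArg (fun z => ((z.1 : Fin (n+2)) : ℕ)) he
    simp at this; omega

lemma invo_succAbove {n : ℕ} (q : Fin (n+2) × Fin (n+1)) (m : Fin n) :
    q.1.succAbove (q.2.succAbove m) = (invo q).1.succAbove ((invo q).2.succAbove m) := by
  obtain ⟨j, k⟩ := q
  unfold invo
  by_cases h : (k : ℕ) < (j : ℕ)
  · rw [dif_pos h]
    ext
    simp only [val_succAbove, Fin.coe_castSucc]
    split_ifs <;> omega
  · rw [dif_neg h]
    ext
    simp only [val_succAbove, Fin.val_succ]
    split_ifs <;> omega

lemma invo_sign {n : ℕ} (q : Fin (n+2) × Fin (n+1)) :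
    ((-1 : ℤ)) ^ ((q.1 : ℕ) + (q.2 : ℕ)) +
      ((-1 : ℤ)) ^ (((invo q).1 : ℕ) + ((invo q).2 : ℕ)) = 0 := by
  obtain ⟨j, k⟩ := q
  unfold invo
  by_cases h : (k : ℕ) < (j : ℕ)
  · rw [dif_pos h]
    have : (j : ℕ) + (k : ℕ) = ((k.castSucc : Fin (n+2)) : ℕ) + ((j:ℕ)-1) + 1 := by simp; omega
    rw [this, pow_succ]
    ring
  · rw [dif_neg h]
    have : ((k.succ : Fin (n+2)) : ℕ) + (j : ℕ) = (j : ℕ) + (k : ℕ) + 1 := by simp; omega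
    rw [this, pow_succ]
    ring

/-- Key combinatorial lemma: the alternating double sum over double-deletions vanishes. -/
lemma comb {n : ℕ} {α : Type*} (f : Fin (n+2) → α) (g : Fin n → α) :
    ∑ j : Fin (n+2), ∑ k : Fin (n+1),
      (if f ∘ j.succAbove ∘ k.succAbove = g then ((-1 : ℤ)) ^ ((j : ℕ) + (k : ℕ)) else 0) = 0 := by
  rw [← Finset.sum_product']
  refine Finset.sum_ninvolution invo ?_ ?_ (fun q => Finset.mem_univ _) invo_invo
  · intro q
    have hfun : f ∘ q.1.succAbove ∘ q.2.succAbove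
        = f ∘ (invo q).1.succAbove ∘ (invo q).2.succAbove := by
      funext m; exact congrArg f (invo_succAbove q m)
    by_cases hc : f ∘ q.1.succAbove ∘ q.2.succAbove = g
    · rw [if_pos hc, if_pos (hfun ▸ hc)]
      exact invo_sign q
    · rw [if_neg hc, if_neg (fun hh => hc (hfun ▸ hh))]
      simp
  · intro q _
    exact invo_ne q

end FiltAux
namespace FiltAux

variable {P : Type u} [PartialOrder P]

section
variable [Fintype P] (x y : P)

/-- Matrix coefficient of the half-open coboundary. -/
noncomputable def dcoef (n : ℕ) (c' : HalfOpenChain x y (n+1)) (c : HalfOpenChain x y n) : ℤ :=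
  ∑ j : Fin (n+1), if c'.val ∘ j.succAbove = c.val then ((-1 : ℤ)) ^ (j : ℕ) else 0

/-- Deletion of one entry of a chain. -/
def resChain {n : ℕ} (c' : HalfOpenChain x y (n+1)) (j : Fin (n+1)) : HalfOpenChain x y n :=
  ⟨c'.val ∘ j.succAbove, c'.2.1.comp (Fin.strictMono_succAbove j), fun i => c'.2.2 _⟩

lemma delta_single {n : ℕ} (c : HalfOpenChain x y n) :
    halfOpenCoboundary x y n (Finsupp.single c 1) =
      ∑ c' : HalfOpenChain x y (n+1), dcoef x y n c' c • Finsupp.single c' 1 := by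
  rw [halfOpenCoboundary, Finsupp.lsum_single]
  rw [show ((LinearMap.toSpanSingleton ℤ (HalfOpenCochain x y (n + 1)) _) (1:ℤ)) = _ from
    one_smul ℤ _]
  exact Finset.sum_congr rfl fun c' _ => by rw [dcoef, Finset.sum_smul]

lemma dcoef_ne_zero {n : ℕ} {c' : HalfOpenChain x y (n+1)} {c : HalfOpenChain x y n}
    (h : dcoef x y n c' c ≠ 0) : ∃ j : Fin (n+1), c'.val ∘ j.succAbove = c.val := by
  by_contra hall
  push_neg at hall
  exact h (Finset.sum_eq_zero fun j _ => if_neg (hall j))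

lemma coef_zero {n : ℕ} (c : HalfOpenChain x y n) (c'' : HalfOpenChain x y (n+2)) :
    ∑ c' : HalfOpenChain x y (n+1), dcoef x y (n+1) c'' c' * dcoef x y n c' c = 0 := by
  have h1 : ∀ c' : HalfOpenChain x y (n+1), dcoef x y (n+1) c'' c' * dcoef x y n c' c
      = ∑ j : Fin (n+2), ∑ k : Fin (n+1),
        (if c''.val ∘ j.succAbove = c'.val then ((-1:ℤ))^(j:ℕ) else 0) *
        (if c'.val ∘ k.succAbove = c.val then ((-1:ℤ))^(k:ℕ) else 0) := by
    intro c'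
    rw [dcoef, dcoef, Finset.sum_mul_sum]
  simp_rw [h1]
  rw [Finset.sum_comm]
  have h2 : ∀ j : Fin (n+2),
      (∑ c' : HalfOpenChain x y (n+1), ∑ k : Fin (n+1),
        (if c''.val ∘ j.succAbove = c'.val then ((-1:ℤ))^(j:ℕ) else 0) *
        (if c'.val ∘ k.succAbove = c.val then ((-1:ℤ))^(k:ℕ) else 0))
      = ∑ k : Fin (n+1),
          (if c''.val ∘ j.succAbove ∘ k.succAbove = c.val then ((-1:ℤ))^((j:ℕ)+(k:ℕ)) else 0) := by
    intro j
    rw [Finset.sum_comm]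
    refine Finset.sum_congr rfl fun k _ => ?_
    rw [Finset.sum_eq_single (resChain x y c'' j)]
    · have h0 : (if c''.val ∘ j.succAbove = (resChain x y c'' j).val then ((-1:ℤ))^(j:ℕ) else 0)
          = ((-1:ℤ))^(j:ℕ) := if_pos rfl
      rw [h0]
      by_cases hc : c''.val ∘ j.succAbove ∘ k.succAbove = c.val
      · rw [if_pos hc, if_pos (show (resChain x y c'' j).val ∘ k.succAbove = c.val from hc),
          pow_add]
      · rw [if_neg hc, if_neg (show ¬ (resChain x y c'' j).val ∘ k.succAbove = c.val from hc),
          mul_zero]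
    · intro c' _ hne
      rw [if_neg, zero_mul]
      intro hh
      exact hne (Subtype.ext hh.symm)
    · intro h
      exact absurd (Finset.mem_univ _) h
  simp_rw [h2]
  exact comb c''.val c.val

lemma delta_delta_single {n : ℕ} (c : HalfOpenChain x y n) :
    halfOpenCoboundary x y (n+1) (halfOpenCoboundary x y n (Finsupp.single c 1)) = 0 := by
  rw [delta_single, map_sum]
  simp_rw [LinearMap.map_smul, delta_single, Finset.smul_sum, smul_smul]
  rw [Finset.sum_comm]
  have : ∀ c'' : HalfOpenChain x y (n+2),
      (∑ c' : HalfOpenChain x y (n+1),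
        (dcoef x y n c' c * dcoef x y (n+1) c'' c') • Finsupp.single c'' (1:ℤ))
      = ((∑ c' : HalfOpenChain x y (n+1),
          dcoef x y (n+1) c'' c' * dcoef x y n c' c) • Finsupp.single c'' (1:ℤ)) := by
    intro c''
    rw [Finset.sum_smul]
    exact Finset.sum_congr rfl fun c' _ => by rw [mul_comm]
  simp_rw [this, coef_zero, zero_smul]
  exact Finset.sum_const_zero

lemma delta_delta {n : ℕ} (v : HalfOpenCochain x y n) :
    halfOpenCoboundary x y (n+1) (halfOpenCoboundary x y n v) = 0 := by
  have : (halfOpenCoboundary x y (n+1)).comp (halfOpenCoboundary x y n) = 0 := by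
    apply Finsupp.lhom_ext'
    intro c
    apply LinearMap.ext_ring
    simpa using delta_delta_single x y c
  simpa using LinearMap.congr_fun this v

/-! ### lastEntry lemmas -/

lemma lastEntry_res_le {n : ℕ} (c' : HalfOpenChain x y (n+1)) (j : Fin (n+1)) :
    lastEntry x (resChain x y c' j).val ≤ lastEntry x c'.val := by
  cases n with
  | zero => exact (c'.2.2 (Fin.last 0)).1.le
  | succ m =>
    exact c'.2.1.monotone (Fin.le_last _)

lemma lastEntry_res_eq {n : ℕ} (c' : HalfOpenChain x y (n+1)) {j : Fin (n+1)}
    (hj : j ≠ Fin.last n) :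
    lastEntry x (resChain x y c' j).val = lastEntry x c'.val := by
  cases n with
  | zero => exact absurd (Fin.val_lt_last hj) (Nat.not_lt_zero _)
  | succ m =>
    show c'.val (j.succAbove (Fin.last m)) = c'.val (Fin.last (m+1))
    have hjv : (j : ℕ) < m + 1 := Fin.val_lt_last hj
    have harg : j.succAbove (Fin.last m) = Fin.last (m+1) := by
      ext
      simp only [val_succAbove, Fin.val_last]
      split_ifs <;> omega
    rw [harg]

lemma lastEntry_res_last {n : ℕ} (c' : HalfOpenChain x y (n+1)) :
    lastEntry x (resChain x y c' (Fin.last n)).val < lastEntry x c'.val := by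
  cases n with
  | zero => exact (c'.2.2 (Fin.last 0)).1
  | succ m =>
    show c'.val ((Fin.last (m+1)).succAbove (Fin.last m)) < c'.val (Fin.last (m+1))
    apply c'.2.1
    rw [Fin.succAbove_last]
    exact Fin.castSucc_lt_last _

/-! ### The filtration is preserved by the differential -/

lemma filt_mono (σ : P → ℤ) (q : ℤ) (n : ℕ) :
    filtF x y σ (q + 1) n ≤ filtF x y σ q n :=
  Finsupp.supported_mono fun c hc => le_trans (show q ≤ q+1 by omega) hc

lemma delta_filt (σ : P → ℤ) (hσ : StrictMono σ) (q : ℤ) (n : ℕ)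
    (v : HalfOpenCochain x y n) (hv : v ∈ filtF x y σ q n) :
    halfOpenCoboundary x y n v ∈ filtF x y σ q (n+1) := by
  rw [filtF, Finsupp.supported_eq_span_single] at hv
  induction hv using Submodule.span_induction with
  | mem w hw =>
    obtain ⟨c, hc, rfl⟩ := hw
    rw [delta_single]
    refine Submodule.sum_mem _ fun c' _ => ?_
    by_cases hd : dcoef x y n c' c = 0
    · rw [hd, zero_smul]; exact Submodule.zero_mem _
    · have h' : (Finsupp.single c' (1:ℤ)) ∈ filtF x y σ q (n+1) := by
        rw [filtF]
        refine Finsupp.single_mem_supported ℤ 1 ?_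
        obtain ⟨j, hj⟩ := dcoef_ne_zero x y hd
        have hle : lastEntry x c.val ≤ lastEntry x c'.val := by
          have := lastEntry_res_le x y c' j
          rwa [show (resChain x y c' j).val = c.val from hj] at this
        exact le_trans hc (hσ.monotone hle)
      exact Submodule.smul_mem _ _ h'
  | zero => rw [map_zero]; exact Submodule.zero_mem _
  | add a b _ _ ha hb => rw [map_add]; exact Submodule.add_mem _ ha hb
  | smul r a _ ha => rw [map_smul]; exact Submodule.smul_mem _ _ ha

end
end FiltAux
namespace FiltAux

variable {P : Type u} [PartialOrder P]

/-! ### cons/tail/lastEntry helpers -/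

lemma cons_lastEntry (x : P) {n : ℕ} (f : Fin n → P) :
    (Fin.cons x f : Fin (n+1) → P) (Fin.last n) = lastEntry x f := by
  cases n with
  | zero => rfl
  | succ m => rw [← Fin.succ_last, Fin.cons_succ]; rfl

lemma tail_lastEntry (x : P) {n : ℕ} (f : Fin (n+1) → P) (h0 : f 0 = x) :
    lastEntry x (Fin.tail f) = f (Fin.last n) := by
  cases n with
  | zero => rw [show (Fin.last 0 : Fin 1) = 0 from rfl, h0]; rfl
  | succ m => rw [← Fin.succ_last]; rfl

lemma strictMono_cons (x : P) {n : ℕ} (f : Fin n → P) (hf : StrictMono f)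
    (hx : ∀ i, x < f i) : StrictMono (Fin.cons x f : Fin (n+1) → P) := by
  intro a b hab
  induction b using Fin.cases with
  | zero => exact absurd (Fin.lt_def.mp hab) (by simp)
  | succ j =>
    induction a using Fin.cases with
    | zero => rw [Fin.cons_zero, Fin.cons_succ]; exact hx j
    | succ i =>
      rw [Fin.cons_succ, Fin.cons_succ]
      exact hf (Fin.succ_lt_succ_iff.mp hab)

lemma cons_comp_succAbove {α : Type*} (a : α) {n : ℕ} (f : Fin (n+1) → α) (j : Fin (n+1)) :
    (Fin.cons a f : Fin (n+2) → α) ∘ (j.succ).succAbove = Fin.cons a (f ∘ j.succAbove) := by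
  funext m
  induction m using Fin.cases with
  | zero =>
    rw [Function.comp_apply, Fin.succ_succAbove_zero, Fin.cons_zero, Fin.cons_zero]
  | succ i =>
    rw [Function.comp_apply, Fin.succ_succAbove_succ, Fin.cons_succ, Fin.cons_succ]
    rfl

/-! ### subtypeDomain on singles -/

lemma subtypeDomain_single_of_mem {α : Type*} {pr : α → Prop} {a : α} (ha : pr a) (b : ℤ) :
    Finsupp.subtypeDomain pr (Finsupp.single a b) = Finsupp.single ⟨a, ha⟩ b := by
  ext a'
  rw [Finsupp.subtypeDomain_apply, Finsupp.single_apply, Finsupp.single_apply]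
  by_cases h : a = (a' : α)
  · rw [if_pos h, if_pos (Subtype.ext h)]
  · rw [if_neg h, if_neg (fun hh => h (congrArg Subtype.val hh))]

lemma subtypeDomain_single_of_not {α : Type*} {pr : α → Prop} {a : α} (ha : ¬ pr a) (b : ℤ) :
    Finsupp.subtypeDomain pr (Finsupp.single a b) = 0 := by
  ext a'
  rw [Finsupp.subtypeDomain_apply, Finsupp.single_apply,
    if_neg (fun h => ha (by rw [h]; exact a'.2))]
  rfl

section Main

variable [Fintype P] (x y : P) (σ : P → ℤ) (p : ℤ)

/-- The set of chains whose last entry has `σ`-value exactly `p`. -/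
def midS (n : ℕ) : Set (HalfOpenChain x y n) := {c | σ (lastEntry x c.val) = p}

lemma x_le_lastEntry {n : ℕ} (c : HalfOpenChain x y n) : x ≤ lastEntry x c.val := by
  cases n with
  | zero => exact le_refl x
  | succ m => exact (c.2.2 (Fin.last m)).1.le

lemma lastEntry_le_y (hxy : x ≤ y) {n : ℕ} (c : HalfOpenChain x y n) :
    lastEntry x c.val ≤ y := by
  cases n with
  | zero => exact hxy
  | succ m => exact (c.2.2 (Fin.last m)).2

/-- The index of the direct summand attached to a chain. -/
def zOf (hxy : x < y) {n : ℕ} (c : ↥(midS x y σ p n)) : {z : P // x ≤ z ∧ z ≤ y ∧ σ z = p} :=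
  ⟨lastEntry x c.1.val, x_le_lastEntry x y c.1, lastEntry_le_y x y hxy.le c.1, c.2⟩

/-- The interval chain attached to a chain. -/
def wOf {n : ℕ} (c : ↥(midS x y σ p n)) : IntervalChain x (lastEntry x c.1.val) n :=
  ⟨Fin.cons x c.1.val, strictMono_cons x c.1.val c.1.2.1 (fun i => (c.1.2.2 i).1),
    Fin.cons_zero _ _, cons_lastEntry x c.1.val⟩

/-- The chain attached to an interval chain. -/
def cOf (z : {z : P // x ≤ z ∧ z ≤ y ∧ σ z = p}) {n : ℕ} (w : IntervalChain x z.val n) :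
    ↥(midS x y σ p n) :=
  ⟨⟨Fin.tail w.val, w.2.1.comp Fin.strictMono_succ, fun i =>
      ⟨by
        have h := w.2.1 (show (0 : Fin (n+1)) < i.succ from i.succ_pos)
        rwa [w.2.2.1] at h,
       le_trans (w.2.1.monotone (Fin.le_last _)) (by rw [w.2.2.2]; exact z.2.2.1)⟩⟩,
    show σ (lastEntry x (Fin.tail w.val)) = p by
      rw [tail_lastEntry x w.val w.2.2.1, w.2.2.2]; exact z.2.2.2⟩

/-- Forward basis map. -/
noncomputable def Phif (hxy : x < y) (n : ℕ) :
    (↥(midS x y σ p n) →₀ ℤ) →ₗ[ℤ] gradedTarget x y σ p n :=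
  Finsupp.lsum ℤ fun c => LinearMap.toSpanSingleton ℤ _
    (DirectSum.lof ℤ _ (fun z : {z : P // x ≤ z ∧ z ≤ y ∧ σ z = p} =>
        IntervalCochain x z.val n)
      (zOf x y σ p hxy c) (Finsupp.single (wOf x y σ p c) 1))

lemma Phif_single (hxy : x < y) (n : ℕ) (c : ↥(midS x y σ p n)) :
    Phif x y σ p hxy n (Finsupp.single c 1) =
      DirectSum.lof ℤ _ (fun z : {z : P // x ≤ z ∧ z ≤ y ∧ σ z = p} =>
        IntervalCochain x z.val n) (zOf x y σ p hxy c) (Finsupp.single (wOf x y σ p c) 1) := by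
  rw [Phif, Finsupp.lsum_single, LinearMap.toSpanSingleton_apply_one]

/-- Backward basis map. -/
noncomputable def Psif (n : ℕ) :
    gradedTarget x y σ p n →ₗ[ℤ] (↥(midS x y σ p n) →₀ ℤ) :=
  DirectSum.toModule ℤ _ _ fun z => Finsupp.lsum ℤ fun w =>
    LinearMap.toSpanSingleton ℤ _ (Finsupp.single (cOf x y σ p z w) 1)

lemma lof_congr {n : ℕ} (z z' : {z : P // x ≤ z ∧ z ≤ y ∧ σ z = p}) (h : z = z')
    (w : IntervalChain x z.val n) (w' : IntervalChain x z'.val n) (hw : w.val = w'.val) :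
    DirectSum.lof ℤ _ (fun z : {z : P // x ≤ z ∧ z ≤ y ∧ σ z = p} =>
        IntervalCochain x z.val n) z (Finsupp.single w 1) =
      DirectSum.lof ℤ _ (fun z : {z : P // x ≤ z ∧ z ≤ y ∧ σ z = p} =>
        IntervalCochain x z.val n) z' (Finsupp.single w' 1) := by
  subst h
  rw [show w = w' from Subtype.ext hw]

/-- The basis equivalence as a linear equivalence. -/
noncomputable def Phi1 (hxy : x < y) (n : ℕ) :
    (↥(midS x y σ p n) →₀ ℤ) ≃ₗ[ℤ] gradedTarget x y σ p n :=
  LinearEquiv.ofLinear (Phif x y σ p hxy n) (Psif x y σ p n)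
    (by
      refine DirectSum.linearMap_ext _ fun z => ?_
      refine Finsupp.lhom_ext' fun w => ?_
      refine LinearMap.ext_ring ?_
      simp only [LinearMap.comp_apply, Finsupp.lsingle_apply, LinearMap.id_apply]
      rw [Psif, DirectSum.toModule_lof, Finsupp.lsum_single, LinearMap.toSpanSingleton_apply_one,
        Phif_single]
      refine lof_congr x y σ p _ z (Subtype.ext ?_) _ w ?_
      · show lastEntry x (Fin.tail w.val) = z.val
        rw [tail_lastEntry x w.val w.2.2.1, w.2.2.2]
      · show Fin.cons x (Fin.tail w.val) = w.val
        have h2 := Fin.cons_self_tail (α := fun _ : Fin (n+1) => P) w.val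
        rwa [w.2.2.1] at h2)
    (by
      refine Finsupp.lhom_ext' fun c => ?_
      refine LinearMap.ext_ring ?_
      simp only [LinearMap.comp_apply, Finsupp.lsingle_apply, LinearMap.id_apply]
      rw [Phif_single, Psif, DirectSum.toModule_lof]
      erw [Finsupp.lsum_single]
      rw [LinearMap.toSpanSingleton_apply_one]
      have hcc : cOf x y σ p (zOf x y σ p hxy c) (wOf x y σ p c) = c := by
        refine Subtype.ext (Subtype.ext ?_)
        show Fin.tail (α := fun _ : Fin (n+1) => P) (Fin.cons x c.1.val) = c.1.val
        exact Fin.tail_cons _ _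
      rw [hcc])

end Main
end FiltAux
namespace FiltAux

variable {P : Type u} [PartialOrder P]

section Main2

variable [Fintype P] (x y : P) (σ : P → ℤ) (p : ℤ)

lemma Rkill {n : ℕ} {v : HalfOpenCochain x y n} (hv : v ∈ filtF x y σ (p+1) n) :
    Finsupp.subtypeDomain (fun c => c ∈ midS x y σ p n) v = 0 := by
  rw [Finsupp.subtypeDomain_eq_zero_iff']
  intro c hcp
  rw [filtF, Finsupp.mem_supported'] at hv
  apply hv
  simp only [Set.mem_setOf_eq]
  have h : σ (lastEntry x c.val) = p := hcp
  omega

lemma diff_mem {n : ℕ} {v : HalfOpenCochain x y n} (hv : v ∈ filtF x y σ p n) :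
    v - Finsupp.mapDomain Subtype.val
        (Finsupp.subtypeDomain (fun c => c ∈ midS x y σ p n) v) ∈ filtF x y σ (p+1) n := by
  rw [filtF, Finsupp.mem_supported']
  intro c hcnot
  simp only [Set.mem_setOf_eq] at hcnot
  rw [Finsupp.sub_apply]
  by_cases hcp : c ∈ midS x y σ p n
  · have h1 : Finsupp.mapDomain Subtype.val
        (Finsupp.subtypeDomain (fun c => c ∈ midS x y σ p n) v) c
        = Finsupp.subtypeDomain (fun c => c ∈ midS x y σ p n) v ⟨c, hcp⟩ :=
      Finsupp.mapDomain_apply Subtype.val_injective _ ⟨c, hcp⟩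
    rw [h1, Finsupp.subtypeDomain_apply, sub_self]
  · have h1 : Finsupp.mapDomain Subtype.val
        (Finsupp.subtypeDomain (fun c => c ∈ midS x y σ p n) v) c = 0 := by
      refine Finsupp.mapDomain_notin_range _ _ ?_
      rw [Subtype.range_val]
      exact hcp
    have h2 : v c = 0 := by
      rw [filtF, Finsupp.mem_supported'] at hv
      apply hv
      simp only [Set.mem_setOf_eq]
      have h3 : σ (lastEntry x c.val) ≠ p := hcp
      omega
    rw [h1, h2, sub_self]

lemma iota_mem {n : ℕ} (g : ↥(midS x y σ p n) →₀ ℤ) :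
    Finsupp.mapDomain Subtype.val g ∈ filtF x y σ p n := by
  rw [filtF, Finsupp.mem_supported]
  intro c hc
  have := Finsupp.mapDomain_support hc
  rw [Finset.mem_image] at this
  obtain ⟨a, _, rfl⟩ := this
  exact le_of_eq a.2.symm

/-- The map realizing `Φ` before quotienting. -/
noncomputable def phiF (hxy : x < y) (n : ℕ) :
    ↥(filtF x y σ p n) →ₗ[ℤ] gradedTarget x y σ p n :=
  (Phif x y σ p hxy n).comp
    ((Finsupp.lsubtypeDomain (midS x y σ p n)).comp (filtF x y σ p n).subtype)

lemma Phif_injective (hxy : x < y) (n : ℕ) :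
    Function.Injective (Phif x y σ p hxy n) := fun a b hab =>
  (Phi1 x y σ p hxy n).injective (by simpa [Phi1, LinearEquiv.ofLinear_apply] using hab)

lemma phiF_ker (hxy : x < y) (n : ℕ) :
    LinearMap.ker (phiF x y σ p hxy n)
      = Submodule.comap (filtF x y σ p n).subtype (filtF x y σ (p+1) n) := by
  ext m
  simp only [LinearMap.mem_ker, Submodule.mem_comap, Submodule.coe_subtype, phiF,
    LinearMap.comp_apply, Finsupp.lsubtypeDomain_apply]
  constructor
  · intro h
    have h0 : Finsupp.subtypeDomain (fun c => c ∈ midS x y σ p n) m.val = 0 := by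
      apply Phif_injective x y σ p hxy n
      rw [h, map_zero]
    rw [Finsupp.subtypeDomain_eq_zero_iff'] at h0
    have hm := m.2
    simp only [filtF, Finsupp.mem_supported'] at hm ⊢
    intro c hcn
    simp only [Set.mem_setOf_eq] at hcn
    by_cases hcp : σ (lastEntry x c.val) = p
    · exact h0 c hcp
    · apply hm
      simp only [Set.mem_setOf_eq]
      omega
  · intro h
    rw [Rkill x y σ p h, map_zero]

lemma phiF_surjective (hxy : x < y) (n : ℕ) :
    Function.Surjective (phiF x y σ p hxy n) := by
  intro t
  set g := (Phi1 x y σ p hxy n).symm t with hg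
  refine ⟨⟨Finsupp.mapDomain Subtype.val g, iota_mem x y σ p g⟩, ?_⟩
  have h1 : Finsupp.subtypeDomain (fun c => c ∈ midS x y σ p n)
      (Finsupp.mapDomain Subtype.val g) = g := by
    ext a
    rw [Finsupp.subtypeDomain_apply]
    exact Finsupp.mapDomain_apply Subtype.val_injective g a
  rw [phiF]
  simp only [LinearMap.comp_apply, Finsupp.lsubtypeDomain_apply, Submodule.coe_subtype]
  rw [h1]
  have h2 : Phif x y σ p hxy n g = Phi1 x y σ p hxy n g := rfl
  rw [h2, hg, LinearEquiv.apply_symm_apply]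

/-- The isomorphism `Φ` on graded pieces. -/
noncomputable def PhiQ (hxy : x < y) (n : ℕ) :
    gradedPiece x y σ p n ≃ₗ[ℤ] gradedTarget x y σ p n :=
  (Submodule.quotEquivOfEq _ _ (phiF_ker x y σ p hxy n).symm).trans
    ((phiF x y σ p hxy n).quotKerEquivOfSurjective (phiF_surjective x y σ p hxy n))

lemma PhiQ_mk (hxy : x < y) (n : ℕ) (m : ↥(filtF x y σ p n)) :
    PhiQ x y σ p hxy n (Submodule.Quotient.mk m)
      = Phif x y σ p hxy n
          (Finsupp.subtypeDomain (fun c => c ∈ midS x y σ p n) m.val) := by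
  rw [PhiQ, LinearEquiv.trans_apply, Submodule.quotEquivOfEq_mk]
  rfl

end Main2
end FiltAux
namespace FiltAux

variable {P : Type u} [PartialOrder P]

section Main3

variable [Fintype P] (x y : P) (σ : P → ℤ) (p : ℤ)

/-- Matrix coefficient of the interval coboundary. -/
noncomputable def ecoef (z : P) (n : ℕ) (w' : IntervalChain x z (n+1))
    (w : IntervalChain x z n) : ℤ :=
  ∑ j : Fin (n+2), if w'.val ∘ j.succAbove = w.val then ((-1 : ℤ)) ^ ((j : ℕ) - 1) else 0

lemma idelta_single (z : P) {n : ℕ} (w : IntervalChain x z n) :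
    intervalCoboundary x z n (Finsupp.single w 1) =
      ∑ w' : IntervalChain x z (n+1), ecoef x z n w' w • Finsupp.single w' 1 := by
  rw [intervalCoboundary, Finsupp.lsum_single]
  rw [show ((LinearMap.toSpanSingleton ℤ (IntervalCochain x z (n + 1)) _) (1:ℤ)) = _ from
    one_smul ℤ _]
  exact Finset.sum_congr rfl fun w' _ => by rw [ecoef, Finset.sum_smul]

lemma ecoef_cons {n : ℕ} (z : P) (w' : IntervalChain x z (n+1)) (w : IntervalChain x z n)
    (c' : HalfOpenChain x y (n+1)) (c : HalfOpenChain x y n)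
    (hw' : w'.val = Fin.cons x c'.val) (hw : w.val = Fin.cons x c.val) :
    ecoef x z n w' w = dcoef x y n c' c := by
  rw [ecoef, dcoef, Fin.sum_univ_succ]
  have h0 : ¬ (w'.val ∘ (0 : Fin (n+2)).succAbove = w.val) := by
    rw [Fin.succAbove_zero, hw', hw]
    intro h
    have h1 := congrFun h 0
    rw [Function.comp_apply, Fin.cons_succ, Fin.cons_zero] at h1
    exact absurd h1 (ne_of_gt (c'.2.2 0).1)
  rw [if_neg h0, zero_add]
  refine Finset.sum_congr rfl fun j _ => ?_
  rw [hw', hw, cons_comp_succAbove]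
  have hiff : (Fin.cons x (c'.val ∘ j.succAbove) = (Fin.cons x c.val : Fin (n+1) → P))
      ↔ c'.val ∘ j.succAbove = c.val := by
    rw [Fin.cons_inj]
    simp
  rw [if_congr hiff rfl rfl, Fin.val_succ, Nat.add_sub_cancel]

/-- cons as an interval chain -/
def consChain {n : ℕ} (c' : HalfOpenChain x y (n+1)) (z : P) (hz : lastEntry x c'.val = z) :
    IntervalChain x z (n+1) :=
  ⟨Fin.cons x c'.val, strictMono_cons x c'.val c'.2.1 (fun i => (c'.2.2 i).1),
   Fin.cons_zero _ _, by rw [cons_lastEntry]; exact hz⟩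

lemma hcore (hxy : x < y) (hσ : StrictMono σ) (n : ℕ) (c : HalfOpenChain x y n)
    (hc : c ∈ midS x y σ p n) :
    Phif x y σ p hxy (n+1) (Finsupp.subtypeDomain (fun c' => c' ∈ midS x y σ p (n+1))
        (halfOpenCoboundary x y n (Finsupp.single c 1)))
      = gradedTargetCoboundary x y σ p n
          (Phif x y σ p hxy n (Finsupp.single (⟨c, hc⟩ : ↥(midS x y σ p n)) 1)) := by
  classical
  -- rewrite the right-hand side
  rw [Phif_single, gradedTargetCoboundary, DirectSum.toModule_lof, LinearMap.comp_apply]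
  erw [idelta_single]
  rw [map_sum]
  simp only [map_smul]
  -- rewrite the left-hand side
  have hL : Finsupp.subtypeDomain (fun c' => c' ∈ midS x y σ p (n+1))
      (halfOpenCoboundary x y n (Finsupp.single c 1))
      = ∑ c' : HalfOpenChain x y (n+1), dcoef x y n c' c •
          Finsupp.subtypeDomain (fun c'' => c'' ∈ midS x y σ p (n+1))
            (Finsupp.single c' 1) := by
    rw [delta_single, ← Finsupp.lsubtypeDomain_apply (R := ℤ) (midS x y σ p (n+1)), map_sum]
    simp only [map_smul, Finsupp.lsubtypeDomain_apply]
  rw [hL, map_sum]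
  simp only [map_smul]
  set T := Finset.univ.filter
    (fun c' : HalfOpenChain x y (n+1) => lastEntry x c'.val = lastEntry x c.val) with hTdef
  have hvan : ∀ c' ∈ (Finset.univ : Finset (HalfOpenChain x y (n+1))), c' ∉ T →
      dcoef x y n c' c • Phif x y σ p hxy (n+1)
        (Finsupp.subtypeDomain (fun c'' => c'' ∈ midS x y σ p (n+1))
          (Finsupp.single c' 1)) = 0 := by
    intro c' _ hnT
    rw [hTdef, Finset.mem_filter] at hnT
    have hne : lastEntry x c'.val ≠ lastEntry x c.val := fun h => hnT ⟨Finset.mem_univ _, h⟩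
    by_cases hd : dcoef x y n c' c = 0
    · rw [hd, zero_smul]
    · obtain ⟨jj, hjj⟩ := dcoef_ne_zero x y hd
      by_cases hjl : jj = Fin.last n
      · have hlt : lastEntry x c.val < lastEntry x c'.val := by
          have h := lastEntry_res_last x y c'
          rw [hjl] at hjj
          rwa [show (resChain x y c' (Fin.last n)).val = c.val from hjj] at h
        have hnp : ¬ (c' ∈ midS x y σ p (n+1)) := by
          intro hm
          have h1 := hσ hlt
          have h2 : σ (lastEntry x c.val) = p := hc
          have h3 : σ (lastEntry x c'.val) = p := hm
          omega
        rw [subtypeDomain_single_of_not hnp 1, map_zero, smul_zero]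
      · have heq : lastEntry x c.val = lastEntry x c'.val := by
          have h := lastEntry_res_eq x y c' hjl
          rwa [show (resChain x y c' jj).val = c.val from hjj] at h
        exact absurd heq.symm hne
  rw [← Finset.sum_subset (Finset.subset_univ T) hvan]
  refine Finset.sum_bij'
    (fun c' hc' => consChain x y c' (lastEntry x c.val) (Finset.mem_filter.mp hc').2)
    (fun w' _ => (cOf x y σ p (zOf x y σ p hxy ⟨c, hc⟩) w').1)
    (fun c' hc' => Finset.mem_univ _)
    (fun w' _ => by
      rw [hTdef, Finset.mem_filter]
      refine ⟨Finset.mem_univ _, ?_⟩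
      show lastEntry x (Fin.tail w'.val) = lastEntry x c.val
      rw [tail_lastEntry x w'.val w'.2.2.1, w'.2.2.2]
      rfl)
    (fun c' hc' => by
      refine Subtype.ext ?_
      show Fin.tail (α := fun _ : Fin (n+2) => P) (Fin.cons x c'.val) = c'.val
      exact Fin.tail_cons _ _)
    (fun w' _ => by
      refine Subtype.ext ?_
      show Fin.cons x (Fin.tail w'.val) = w'.val
      have h2 := Fin.cons_self_tail (α := fun _ : Fin (n+2) => P) w'.val
      rwa [w'.2.2.1] at h2)
    (fun c' hc' => ?_)
  -- the terms match
  have hT : lastEntry x c'.val = lastEntry x c.val := (Finset.mem_filter.mp hc').2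
  have hc'm : c' ∈ midS x y σ p (n+1) := show σ (lastEntry x c'.val) = p by
    rw [hT]; exact hc
  rw [subtypeDomain_single_of_mem hc'm 1, Phif_single]
  beta_reduce
  have hterm : ecoef x (↑(zOf x y σ p hxy ⟨c, hc⟩)) n
      (consChain x y c' (lastEntry x c.val) hT) (wOf x y σ p ⟨c, hc⟩)
      = dcoef x y n c' c :=
    ecoef_cons x y _ _ _ c' c rfl rfl
  rw [hterm]
  congr 1
  exact lof_congr x y σ p _ _ (Subtype.ext hT) _ _ rfl

end Main3
end FiltAux
namespace FiltAux

variable {P : Type u} [PartialOrder P]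

section Main4

variable [Fintype P] (x y : P) (σ : P → ℤ) (p : ℤ)

/-- The induced differential on graded pieces. -/
noncomputable def dbar (hσ : StrictMono σ) (n : ℕ) :
    gradedPiece x y σ p n →ₗ[ℤ] gradedPiece x y σ p (n+1) :=
  Submodule.mapQ _ _
    ((halfOpenCoboundary x y n).restrict
      (fun v hv => delta_filt x y σ hσ p n v hv))
    (fun m hm => delta_filt x y σ hσ (p+1) n m.val hm)

lemma dbar_mk (hσ : StrictMono σ) (n : ℕ) (v : HalfOpenCochain x y n)
    (hv : v ∈ filtF x y σ p n)
    (hv' : halfOpenCoboundary x y n v ∈ filtF x y σ p (n+1)) :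
    dbar x y σ p hσ n (Submodule.Quotient.mk ⟨v, hv⟩)
      = Submodule.Quotient.mk ⟨halfOpenCoboundary x y n v, hv'⟩ := by
  rw [dbar]
  rfl

lemma comm_sq (hxy : x < y) (hσ : StrictMono σ) (n : ℕ) :
    (PhiQ x y σ p hxy (n+1)).toLinearMap.comp (dbar x y σ p hσ n)
      = (gradedTargetCoboundary x y σ p n).comp (PhiQ x y σ p hxy n).toLinearMap := by
  apply LinearMap.ext
  intro q
  obtain ⟨m, rfl⟩ := Submodule.Quotient.mk_surjective _ q
  rw [LinearMap.comp_apply, LinearMap.comp_apply, LinearEquiv.coe_coe, LinearEquiv.coe_coe,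
    dbar]
  erw [Submodule.mapQ_apply]
  rw [PhiQ_mk, PhiQ_mk]
  have hres : (((halfOpenCoboundary x y n).restrict
      (fun v hv => delta_filt x y σ hσ p n v hv)) m).val
      = halfOpenCoboundary x y n m.val := rfl
  rw [hres]
  -- step (i): modulo F^{p+1}, m.val may be replaced by the extension of its restriction
  have h0 := Rkill x y σ p (delta_filt x y σ hσ (p+1) n _ (diff_mem x y σ p m.2))
  rw [map_sub, Finsupp.subtypeDomain_sub, sub_eq_zero] at h0
  rw [h0]
  -- step (ii): the core computation, extended by linearity
  have key : (Phif x y σ p hxy (n+1)).comp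
      ((Finsupp.lsubtypeDomain (R := ℤ) (midS x y σ p (n+1))).comp
        ((halfOpenCoboundary x y n).comp (Finsupp.lmapDomain ℤ ℤ Subtype.val)))
      = (gradedTargetCoboundary x y σ p n).comp (Phif x y σ p hxy n) := by
    refine Finsupp.lhom_ext' fun cm => ?_
    refine LinearMap.ext_ring ?_
    simp only [LinearMap.comp_apply, Finsupp.lsingle_apply, Finsupp.lmapDomain_apply,
      Finsupp.mapDomain_single, Finsupp.lsubtypeDomain_apply]
    exact hcore x y σ p hxy hσ n cm.1 cm.2
  have hkey := LinearMap.congr_fun key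
    (Finsupp.subtypeDomain (fun c => c ∈ midS x y σ p n) m.val)
  simp only [LinearMap.comp_apply, Finsupp.lmapDomain_apply,
    Finsupp.lsubtypeDomain_apply] at hkey
  exact hkey

end Main4
end FiltAux
/-- Let `P` be a finite poset, `x < y` in `P` and `σ : P → ℤ` strictly
increasing.  Filter the reduced order cochain complex `C̃^•` of the half-open interval
`(x,y]` by the submodules `F^p` spanned by the chains whose last element has `σ`-value
`≥ p` (with the stated convention in degree `-1`).  Then:
(0) `C̃^•` is a cochain complex;
(1) each `F^p` is a subcomplex, and the filtration is decreasing; and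
(2) for every `p`, the quotient complex `F^p/F^{p+1}` (with its induced differential
`δbar`) is isomorphic, as a cochain complex of abelian groups, to
`⊕_{x ≤ z ≤ y, σ(z) = p} C̃^{•-1}(x,z)`, via the map sending the class of a chain
`z_0 < ⋯ < z_{d}` with `σ(z_d) = p` to the sequence `x < z_0 < ⋯ < z_d` viewed as a basis
element of `C̃^{d-1}(x, z_d)` (for `d = -1`, the empty chain is sent to the generator of
`C̃^{-2}(x,x) = ℤ` in the summand `z = x`, when `p = σ(x)`). -/
theorem filtration_gradedPieces_of_halfOpenInterval
    [Fintype P] (x y : P) (hxy : x < y) (σ : P → ℤ) (hσ : StrictMono σ) (p : ℤ) :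
    -- (0) the differential squares to zero
    (∀ (n : ℕ) (v : HalfOpenCochain x y n),
        halfOpenCoboundary x y (n + 1) (halfOpenCoboundary x y n v) = 0) ∧
    -- (1) decreasing filtration by subcomplexes
    (∀ (q : ℤ) (n : ℕ), filtF x y σ (q + 1) n ≤ filtF x y σ q n) ∧
    (∀ (q : ℤ) (n : ℕ) (v : HalfOpenCochain x y n),
        v ∈ filtF x y σ q n → halfOpenCoboundary x y n v ∈ filtF x y σ q (n + 1)) ∧
    -- (2) the associated graded piece, as a complex
    ∃ δbar : ∀ n : ℕ, gradedPiece x y σ p n →ₗ[ℤ] gradedPiece x y σ p (n + 1),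
      -- δbar is the differential induced by `halfOpenCoboundary` on the quotient complex
      (∀ (n : ℕ) (v : HalfOpenCochain x y n) (hv : v ∈ filtF x y σ p n)
          (hv' : halfOpenCoboundary x y n v ∈ filtF x y σ p (n + 1)),
          δbar n (Submodule.Quotient.mk ⟨v, hv⟩) =
            Submodule.Quotient.mk ⟨halfOpenCoboundary x y n v, hv'⟩) ∧
      ∃ Φ : ∀ n : ℕ, gradedPiece x y σ p n ≃ₗ[ℤ] gradedTarget x y σ p n,
        -- Φ is an isomorphism of cochain complexes
        (∀ n : ℕ, (Φ (n + 1)).toLinearMap ∘ₗ δbar n =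
            (gradedTargetCoboundary x y σ p n) ∘ₗ (Φ n).toLinearMap) ∧
        -- Φ sends (the class of) a chain `z_0 < ⋯ < z_d` with `σ(z_d) = p` to the
        -- sequence `x < z_0 < ⋯ < z_d`, a basis element of `C̃^{d-1}(x, z_d)`
        (∀ (n : ℕ) (c : HalfOpenChain x y n)
            (h1 : x ≤ lastEntry x c.val) (h2 : lastEntry x c.val ≤ y)
            (h3 : σ (lastEntry x c.val) = p)
            (hc : Finsupp.single c 1 ∈ filtF x y σ p n)
            (w : IntervalChain x (lastEntry x c.val) n)
            (hw : w.val = Fin.cons x c.val),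
            Φ n (Submodule.Quotient.mk ⟨Finsupp.single c 1, hc⟩) =
              DirectSum.lof ℤ _
                (fun z : {z : P // x ≤ z ∧ z ≤ y ∧ σ z = p} => IntervalCochain x z.val n)
                ⟨lastEntry x c.val, h1, h2, h3⟩ (Finsupp.single w 1)) := by
  classical
  refine ⟨fun n v => FiltAux.delta_delta x y v,
    fun q n => FiltAux.filt_mono x y σ q n,
    fun q n v hv => FiltAux.delta_filt x y σ hσ q n v hv,
    FiltAux.dbar x y σ p hσ,
    fun n v hv hv' => FiltAux.dbar_mk x y σ p hσ n v hv hv',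
    FiltAux.PhiQ x y σ p hxy,
    fun n => FiltAux.comm_sq x y σ p hxy hσ n,
    ?_⟩
  intro n c h1 h2 h3 hc w hw
  rw [FiltAux.PhiQ_mk]
  rw [FiltAux.subtypeDomain_single_of_mem (show c ∈ FiltAux.midS x y σ p n from h3) 1,
    FiltAux.Phif_single]
  exact FiltAux.lof_congr x y σ p _ _ (Subtype.ext rfl) _ _ (by rw [hw]; rfl)
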